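/- Let P be a polyomino with at most 5 cells, and let U₁,…,U_k be pairwise disjoint cell sets, each disjoint from P and each a translate of either the upward-opening U-pentomino U₀ = {(0,0),(1,0),(2,0),(0,1),(2,1)} or its reflection across a horizontal axis (a downward-opening U), such that the pocket cell of each U_j belongs to P. Then k ≤ 2. -/

import Mathlib

/-- Two cells of `ℤ × ℤ` are edge-adjacent iff they are at Euclidean distance 1. -/
def EdgeAdj (c d : ℤ × ℤ) : Prop := (c.1 - d.1).natAbs + (c.2 - d.2).natAbs = 1

/-- A polyomino: a finite nonempty edge-connected set of cells. -/
def IsPolyomino (S : Finset (ℤ × ℤ)) : Prop :=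
  S.Nonempty ∧ ∀ c ∈ S, ∀ d ∈ S,
    Relation.ReflTransGen (fun a b => a ∈ S ∧ b ∈ S ∧ EdgeAdj a b) c d

/-- The upward-opening U-pentomino, with pocket cell `(1, 1)`. -/
def U0 : Finset (ℤ × ℤ) := {(0, 0), (1, 0), (2, 0), (0, 1), (2, 1)}

/-- The downward-opening U-pentomino (the reflection of `U0` across a horizontal axis),
with pocket cell `(1, -1)`. -/
def U0down : Finset (ℤ × ℤ) := U0.image fun c => (c.1, -c.2)

lemma edge_cases {a b : ℤ×ℤ} (h : EdgeAdj a b) :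
    (a.1 = b.1 ∧ (a.2 = b.2 + 1 ∨ a.2 = b.2 - 1)) ∨
    (a.2 = b.2 ∧ (a.1 = b.1 + 1 ∨ a.1 = b.1 - 1)) := by
  unfold EdgeAdj at h; omega

lemma edge_symm {a b : ℤ×ℤ} (h : EdgeAdj a b) : EdgeAdj b a := by
  unfold EdgeAdj at *; omega

lemma pair_eq {b : ℤ×ℤ} {x y : ℤ} (h1 : b.1 = x) (h2 : b.2 = y) : b = (x,y) := by
  cases b; simp_all

def Pocket (P Uj : Finset (ℤ×ℤ)) (p : ℤ×ℤ) (e : ℤ) : Prop :=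
  (e = 1 ∨ e = -1) ∧ p ∈ P ∧
  (p.1-1,p.2) ∈ Uj ∧ (p.1+1,p.2) ∈ Uj ∧
  (p.1,p.2-e) ∈ Uj ∧ (p.1-1,p.2-e) ∈ Uj ∧ (p.1+1,p.2-e) ∈ Uj

lemma mem_shift {W Uj : Finset (ℤ×ℤ)} {v a b : ℤ×ℤ}
    (hu : Uj = W.image (fun c => c + v)) (ha : a ∈ W) (hb : b = a + v) : b ∈ Uj := by
  subst hb; rw [hu]; exact Finset.mem_image_of_mem _ ha

lemma pocket_exists {P Uj : Finset (ℤ×ℤ)}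
    (h : ∃ v : ℤ × ℤ,
      (Uj = U0.image (fun c => c + v) ∧ ((1 : ℤ), (1 : ℤ)) + v ∈ P) ∨
      (Uj = U0down.image (fun c => c + v) ∧ ((1 : ℤ), (-1 : ℤ)) + v ∈ P)) :
    ∃ p e, Pocket P Uj p e := by
  obtain ⟨v, ⟨hu, hp⟩ | ⟨hu, hp⟩⟩ := h
  · refine ⟨(1 + v.1, 1 + v.2), 1, Or.inl rfl, ?_,
      mem_shift hu (show ((0:ℤ),(1:ℤ)) ∈ U0 by decide) ?_,
      mem_shift hu (show ((2:ℤ),(1:ℤ)) ∈ U0 by decide) ?_,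
      mem_shift hu (show ((1:ℤ),(0:ℤ)) ∈ U0 by decide) ?_,
      mem_shift hu (show ((0:ℤ),(0:ℤ)) ∈ U0 by decide) ?_,
      mem_shift hu (show ((2:ℤ),(0:ℤ)) ∈ U0 by decide) ?_⟩
    · exact (show ((1:ℤ),(1:ℤ)) + v = (1+v.1,1+v.2) from by cases v; rfl) ▸ hp
    all_goals cases v; simp only [Prod.mk_add_mk, Prod.mk.injEq]; constructor <;> first | ring | trivial
  · refine ⟨(1 + v.1, -1 + v.2), -1, Or.inr rfl, ?_,
      mem_shift hu (show ((0:ℤ),(-1:ℤ)) ∈ U0down by decide) ?_,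
      mem_shift hu (show ((2:ℤ),(-1:ℤ)) ∈ U0down by decide) ?_,
      mem_shift hu (show ((1:ℤ),(0:ℤ)) ∈ U0down by decide) ?_,
      mem_shift hu (show ((0:ℤ),(0:ℤ)) ∈ U0down by decide) ?_,
      mem_shift hu (show ((2:ℤ),(0:ℤ)) ∈ U0down by decide) ?_⟩
    · exact (show ((1:ℤ),(-1:ℤ)) + v = (1+v.1,-1+v.2) from by cases v; rfl) ▸ hp
    all_goals cases v; simp only [Prod.mk_add_mk, Prod.mk.injEq]; constructor <;> first | ring | trivial

lemma pocket_nbr {P Uj : Finset (ℤ×ℤ)} {p : ℤ×ℤ} {e : ℤ}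
    (hd : Disjoint Uj P) (h : Pocket P Uj p e) :
    ∀ b ∈ P, EdgeAdj p b → b = (p.1, p.2 + e) := by
  obtain ⟨he, hp, h1, h2, h3, _, _⟩ := h
  intro b hb hadj
  have hnd := Finset.disjoint_left.mp hd
  rcases edge_cases hadj with ⟨h4, h5 | h5⟩ | ⟨h4, h5 | h5⟩
  · rcases he with rfl | rfl
    · exact absurd hb (by rw [show b = (p.1, p.2-1) from pair_eq (by omega) (by omega)] at hb ⊢; exact fun _ => hnd h3 hb)
    · exact pair_eq (by omega) (by omega)
  · rcases he with rfl | rfl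
    · exact pair_eq (by omega) (by omega)
    · exact absurd hb (by rw [show b = (p.1, p.2+1) from pair_eq (by omega) (by omega)] at hb ⊢; intro _; exact hnd (by simpa using h3) hb)
  · exact absurd hb (by rw [show b = (p.1-1, p.2) from pair_eq (by omega) (by omega)] at hb ⊢; exact fun _ => hnd h1 hb)
  · exact absurd hb (by rw [show b = (p.1+1, p.2) from pair_eq (by omega) (by omega)] at hb ⊢; exact fun _ => hnd h2 hb)

lemma pockets_ne {P Ui Uj : Finset (ℤ×ℤ)} {p q : ℤ×ℤ} {e f : ℤ}
    (hd : Disjoint Ui Uj) (hi : Pocket P Ui p e) (hj : Pocket P Uj q f) : p ≠ q := by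
  rintro rfl
  exact Finset.disjoint_left.mp hd hi.2.2.2.1 hj.2.2.2.1

lemma reach_closed {P : Finset (ℤ×ℤ)} (X : Set (ℤ×ℤ))
    (hX : ∀ a ∈ X, ∀ b ∈ P, EdgeAdj a b → b ∈ X) {c d : ℤ×ℤ}
    (h : Relation.ReflTransGen (fun a b => a ∈ P ∧ b ∈ P ∧ EdgeAdj a b) c d)
    (hc : c ∈ X) : d ∈ X := by
  induction h with
  | refl => exact hc
  | tail _ h2 ih => exact hX _ ih _ h2.2.1 h2.2.2

lemma exists_nbr {P : Finset (ℤ×ℤ)} (hpoly : IsPolyomino P) {c d : ℤ×ℤ}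
    (hc : c ∈ P) (hd : d ∈ P) (hne : c ≠ d) :
    ∃ b ∈ P, EdgeAdj c b := by
  rcases (Relation.ReflTransGen.cases_head (hpoly.2 c hc d hd)) with h | ⟨b, hb, _⟩
  · exact absurd h hne
  · exact ⟨b, hb.2.1, hb.2.2⟩


lemma stem_ne_self {p : ℤ×ℤ} {e : ℤ} (he : e = 1 ∨ e = -1) : (p.1, p.2+e) ≠ p := by
  intro h; have := congrArg Prod.snd h; simp at this; omega

lemma pair_ext {a b : ℤ×ℤ} (h1 : a.1 = b.1) (h2 : a.2 = b.2) : a = b := by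
  cases a; cases b; simp_all

/-- At most two U-pentominoes can have their pockets touching the same polyomino of at
most five cells: if `U 1, …, U k` are pairwise disjoint translates of the upward- or
downward-opening U-pentomino, each disjoint from `P` and each with its pocket cell in `P`,
then `k ≤ 2`. -/
theorem at_most_two_attached_Us (P : Finset (ℤ × ℤ))
    (hpoly : IsPolyomino P) (hcard : P.card ≤ 5)
    (k : ℕ) (U : Fin k → Finset (ℤ × ℤ))
    (hUdisj : Pairwise fun i j => Disjoint (U i) (U j))
    (hPdisj : ∀ j, Disjoint (U j) P)
    (hU : ∀ j, ∃ v : ℤ × ℤ,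
      (U j = U0.image (fun c => c + v) ∧ ((1 : ℤ), (1 : ℤ)) + v ∈ P) ∨
      (U j = U0down.image (fun c => c + v) ∧ ((1 : ℤ), (-1 : ℤ)) + v ∈ P)) :
    k ≤ 2 := by
  by_contra hk
  push_neg at hk
  set i0 : Fin k := ⟨0, by omega⟩ with hi0def
  set i1 : Fin k := ⟨1, by omega⟩ with hi1def
  set i2 : Fin k := ⟨2, by omega⟩ with hi2def
  have n01 : i0 ≠ i1 := by simp [hi0def, hi1def, Fin.ext_iff]
  have n02 : i0 ≠ i2 := by simp [hi0def, hi2def, Fin.ext_iff]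
  have n12 : i1 ≠ i2 := by simp [hi1def, hi2def, Fin.ext_iff]
  obtain ⟨p0, e0, pk0⟩ := pocket_exists (hU i0)
  obtain ⟨p1, e1, pk1⟩ := pocket_exists (hU i1)
  obtain ⟨p2, e2, pk2⟩ := pocket_exists (hU i2)
  have q01 : p0 ≠ p1 := pockets_ne (hUdisj n01) pk0 pk1
  have q02 : p0 ≠ p2 := pockets_ne (hUdisj n02) pk0 pk2
  have q12 : p1 ≠ p2 := pockets_ne (hUdisj n12) pk1 pk2
  -- stems belong to P
  have hs0 : (p0.1, p0.2 + e0) ∈ P := by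
    obtain ⟨b, hb, hadj⟩ := exists_nbr hpoly pk0.2.1 pk1.2.1 q01
    rw [← pocket_nbr (hPdisj i0) pk0 b hb hadj]; exact hb
  have hs1 : (p1.1, p1.2 + e1) ∈ P := by
    obtain ⟨b, hb, hadj⟩ := exists_nbr hpoly pk1.2.1 pk0.2.1 q01.symm
    rw [← pocket_nbr (hPdisj i1) pk1 b hb hadj]; exact hb
  have hs2 : (p2.1, p2.2 + e2) ∈ P := by
    obtain ⟨b, hb, hadj⟩ := exists_nbr hpoly pk2.2.1 pk0.2.1 q02.symm
    rw [← pocket_nbr (hPdisj i2) pk2 b hb hadj]; exact hb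
  -- if a stem of one pocket is another pocket, P has only those two cells
  have stemB : ∀ (a b : Fin k) (pa pb : ℤ×ℤ) (ea eb : ℤ),
      Pocket P (U a) pa ea → Pocket P (U b) pb eb →
      (pa.1, pa.2 + ea) = pb → ∀ d ∈ P, d = pa ∨ d = pb := by
    intro a b pa pb ea eb hma hmb hstem d hd
    have h1 : pb.1 = pa.1 := by rw [← hstem]
    have h2 : pb.2 = pa.2 + ea := by rw [← hstem]
    have hadj : EdgeAdj pb pa := by
      unfold EdgeAdj; rcases hma.1 with h | h <;> omega
    have hpa_eq := pocket_nbr (hPdisj b) hmb pa hma.2.1 hadj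
    have hX : ∀ x ∈ ({pa, pb} : Set (ℤ×ℤ)), ∀ y ∈ P, EdgeAdj x y →
        y ∈ ({pa, pb} : Set (ℤ×ℤ)) := by
      rintro x hx y hy hadj'
      simp only [Set.mem_insert_iff, Set.mem_singleton_iff] at hx ⊢
      rcases hx with rfl | rfl
      · right; rw [pocket_nbr (hPdisj a) hma y hy hadj', hstem]
      · left; rw [pocket_nbr (hPdisj b) hmb y hy hadj', ← hpa_eq]
    have hmem := reach_closed _ hX (hpoly.2 pa hma.2.1 d hd) (Set.mem_insert _ _)
    simpa using hmem
  have noSP : ∀ (a b : Fin k) (pa pb pc : ℤ×ℤ) (ea eb : ℤ),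
      Pocket P (U a) pa ea → Pocket P (U b) pb eb → pc ∈ P → pc ≠ pa → pc ≠ pb →
      (pa.1, pa.2 + ea) ≠ pb := by
    intro a b pa pb pc ea eb hma hmb hpc hca hcb hstem
    rcases stemB a b pa pb ea eb hma hmb hstem pc hpc with h | h
    exacts [hca h, hcb h]
  have n0_1 : (p0.1, p0.2+e0) ≠ p1 := noSP i0 i1 p0 p1 p2 e0 e1 pk0 pk1 pk2.2.1 q02.symm q12.symm
  have n0_2 : (p0.1, p0.2+e0) ≠ p2 := noSP i0 i2 p0 p2 p1 e0 e2 pk0 pk2 pk1.2.1 q01.symm q12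
  have n1_0 : (p1.1, p1.2+e1) ≠ p0 := noSP i1 i0 p1 p0 p2 e1 e0 pk1 pk0 pk2.2.1 q12.symm q02.symm
  have n1_2 : (p1.1, p1.2+e1) ≠ p2 := noSP i1 i2 p1 p2 p0 e1 e2 pk1 pk2 pk0.2.1 q01 q02
  have n2_0 : (p2.1, p2.2+e2) ≠ p0 := noSP i2 i0 p2 p0 p1 e2 e0 pk2 pk0 pk1.2.1 q12 q01.symm
  have n2_1 : (p2.1, p2.2+e2) ≠ p1 := noSP i2 i1 p2 p1 p0 e2 e1 pk2 pk1 pk0.2.1 q02 q01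
  have n0_0 : (p0.1, p0.2+e0) ≠ p0 := stem_ne_self pk0.1
  have n1_1 : (p1.1, p1.2+e1) ≠ p1 := stem_ne_self pk1.1
  have n2_2 : (p2.1, p2.2+e2) ≠ p2 := stem_ne_self pk2.1
  -- the case where two stems coincide
  have finalCase : ∀ (a b cc : Fin k) (pa pb pc : ℤ×ℤ) (ea eb ec : ℤ),
      Pocket P (U a) pa ea → Pocket P (U b) pb eb → Pocket P (U cc) pc ec →
      pa ≠ pb → pa ≠ pc → pb ≠ pc →
      (pa.1, pa.2+ea) ∈ P → (pc.1, pc.2+ec) ∈ P →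
      (pa.1, pa.2+ea) ≠ pc → (pc.1, pc.2+ec) ≠ pa → (pc.1, pc.2+ec) ≠ pb →
      (pa.1, pa.2+ea) = (pb.1, pb.2+eb) → False := by
    intro a b cc pa pb pc ea eb ec hma hmb hmc hab hac hbc hsaP hscP hcnepc hscnepa hscnepb hstem
    have hea := hma.1
    have heb := hmb.1
    have hec := hmc.1
    obtain ⟨c, hcdef⟩ : ∃ x : ℤ×ℤ, x = (pa.1, pa.2+ea) := ⟨_, rfl⟩
    obtain ⟨sc, hscdef⟩ : ∃ x : ℤ×ℤ, x = (pc.1, pc.2+ec) := ⟨_, rfl⟩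
    rw [← hcdef] at hstem hsaP hcnepc
    rw [← hscdef] at hscP hscnepa hscnepb
    have hc1 : c.1 = pa.1 := by rw [hcdef]
    have hc2 : c.2 = pa.2 + ea := by rw [hcdef]
    have hsc1 : sc.1 = pc.1 := by rw [hscdef]
    have hsc2 : sc.2 = pc.2 + ec := by rw [hscdef]
    have hb1 : pb.1 = pa.1 := by
      have h := congrArg Prod.fst hstem; rw [hcdef] at h; simp at h; omega
    have hb2 : pb.2 + eb = pa.2 + ea := by
      have h := congrArg Prod.snd hstem; rw [hcdef] at h; simp at h; omega
    have hpac : pa ≠ c := by rw [hcdef]; exact (stem_ne_self hea).symm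
    have hpbc : pb ≠ c := by rw [hstem]; exact (stem_ne_self heb).symm
    have hpcsc : pc ≠ sc := by rw [hscdef]; exact (stem_ne_self hec).symm
    have habne : pa.1 ≠ pb.1 ∨ pa.2 ≠ pb.2 := by
      by_contra hcon; push_neg at hcon; exact hab (pair_ext hcon.1 hcon.2)
    have heab : eb = -ea := by rcases hea with rfl | rfl <;> rcases heb with rfl | rfl <;> omega
    have hscnec : sc ≠ c := by
      intro h
      have hh1 : sc.1 = c.1 := by rw [h]
      have hh2 : sc.2 = c.2 := by rw [h]
      rcases hea with he1 | he1 <;> rcases hec with he2 | he2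
      · exact hac (pair_ext (by omega) (by omega)).symm
      · exact hbc (pair_ext (by omega) (by omega)).symm
      · exact hbc (pair_ext (by omega) (by omega)).symm
      · exact hac (pair_ext (by omega) (by omega)).symm
    -- P consists of exactly these five cells
    have hsub : ({pa, pb, pc, c, sc} : Finset (ℤ×ℤ)) ⊆ P := by
      intro x hx
      simp only [Finset.mem_insert, Finset.mem_singleton] at hx
      rcases hx with rfl | rfl | rfl | rfl | rfl
      exacts [hma.2.1, hmb.2.1, hmc.2.1, hsaP, hscP]
    have hcard5 : ({pa, pb, pc, c, sc} : Finset (ℤ×ℤ)).card = 5 := by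
      rw [Finset.card_insert_of_notMem (by
        simp only [Finset.mem_insert, Finset.mem_singleton]; push_neg
        exact ⟨hab, hac, hpac, hscnepa.symm⟩)]
      rw [Finset.card_insert_of_notMem (by
        simp only [Finset.mem_insert, Finset.mem_singleton]; push_neg
        exact ⟨hbc, hpbc, hscnepb.symm⟩)]
      rw [Finset.card_insert_of_notMem (by
        simp only [Finset.mem_insert, Finset.mem_singleton]; push_neg
        exact ⟨hcnepc.symm, hpcsc⟩)]
      rw [Finset.card_insert_of_notMem (by
        simp only [Finset.mem_singleton]; exact hscnec.symm)]
      rw [Finset.card_singleton]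
    have hPeq : ({pa, pb, pc, c, sc} : Finset (ℤ×ℤ)) = P :=
      Finset.eq_of_subset_of_card_le hsub (by omega)
    -- sc must have a neighbour in P other than pc
    by_cases hall : ∀ y ∈ P, EdgeAdj sc y → y = pc
    · have hX : ∀ x ∈ ({pc, sc} : Set (ℤ×ℤ)), ∀ y ∈ P, EdgeAdj x y →
          y ∈ ({pc, sc} : Set (ℤ×ℤ)) := by
        rintro x hx y hy hadj
        simp only [Set.mem_insert_iff, Set.mem_singleton_iff] at hx ⊢
        rcases hx with rfl | rfl
        · right; rw [pocket_nbr (hPdisj cc) hmc y hy hadj]; exact hscdef.symm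
        · left; exact hall y hy hadj
      have hreach := reach_closed _ hX (hpoly.2 pc hmc.2.1 c (hsub (by simp)))
        (Set.mem_insert _ _)
      simp only [Set.mem_insert_iff, Set.mem_singleton_iff] at hreach
      rcases hreach with h | h
      · exact hcnepc h
      · exact hscnec h.symm
    · push_neg at hall
      obtain ⟨y, hy, hadj, hyne⟩ := hall
      rw [← hPeq] at hy
      simp only [Finset.mem_insert, Finset.mem_singleton] at hy
      rcases hy with rfl | rfl | rfl | rfl | rfl
      · exact hscnec (by rw [hcdef]; exact pocket_nbr (hPdisj a) hma sc hscP (edge_symm hadj))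
      · have h := pocket_nbr (hPdisj b) hmb sc hscP (edge_symm hadj)
        rw [← hstem] at h
        exact hscnec h
      · exact hyne rfl
      on_goal 2 => unfold EdgeAdj at hadj; omega
      · -- y = c : sc is horizontally adjacent to c, giving pc inside a U
        rcases edge_cases hadj with ⟨h4, h5 | h5⟩ | ⟨h4, h5 | h5⟩
        · -- vertical: sc = pa or pb
          rcases hea with he1 | he1 <;>
            first
            | exact hscnepa (pair_ext (by omega) (by omega))
            | exact hscnepb (pair_ext (by omega) (by omega))
        · rcases hea with he1 | he1 <;>
            first
            | exact hscnepa (pair_ext (by omega) (by omega))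
            | exact hscnepb (pair_ext (by omega) (by omega))
        all_goals {
          refine absurd hmc.2.1 ?_
          rcases hea with he1 | he1 <;> rcases hec with he2 | he2 <;>
          first
          | (rw [show pc = (pa.1 + 1, pa.2) from pair_ext (by simp; omega) (by simp; omega)]
             exact Finset.disjoint_left.mp (hPdisj a) hma.2.2.2.1)
          | (rw [show pc = (pa.1 - 1, pa.2) from pair_ext (by simp; omega) (by simp; omega)]
             exact Finset.disjoint_left.mp (hPdisj a) hma.2.2.1)
          | (rw [show pc = (pb.1 + 1, pb.2) from pair_ext (by simp; omega) (by simp; omega)]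
             exact Finset.disjoint_left.mp (hPdisj b) hmb.2.2.2.1)
          | (rw [show pc = (pb.1 - 1, pb.2) from pair_ext (by simp; omega) (by simp; omega)]
             exact Finset.disjoint_left.mp (hPdisj b) hmb.2.2.1) }
  -- now the pigeonhole on stems
  by_cases h01 : (p0.1, p0.2+e0) = (p1.1, p1.2+e1)
  · exact finalCase i0 i1 i2 p0 p1 p2 e0 e1 e2 pk0 pk1 pk2 q01 q02 q12
      hs0 hs2 n0_2 n2_0 n2_1 h01
  by_cases h02 : (p0.1, p0.2+e0) = (p2.1, p2.2+e2)
  · exact finalCase i0 i2 i1 p0 p2 p1 e0 e2 e1 pk0 pk2 pk1 q02 q01 q12.symm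
      hs0 hs1 n0_1 n1_0 n1_2 h02
  by_cases h12 : (p1.1, p1.2+e1) = (p2.1, p2.2+e2)
  · exact finalCase i1 i2 i0 p1 p2 p0 e1 e2 e0 pk1 pk2 pk0 q12 q01.symm q02.symm
      hs1 hs0 n1_0 n0_1 n0_2 h12
  -- all six cells distinct: contradiction with card ≤ 5
  have hsub : ({p0, p1, p2, (p0.1,p0.2+e0), (p1.1,p1.2+e1), (p2.1,p2.2+e2)} :
      Finset (ℤ×ℤ)) ⊆ P := by
    intro x hx
    simp only [Finset.mem_insert, Finset.mem_singleton] at hx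
    rcases hx with rfl | rfl | rfl | rfl | rfl | rfl
    exacts [pk0.2.1, pk1.2.1, pk2.2.1, hs0, hs1, hs2]
  have hc6 : ({p0, p1, p2, (p0.1,p0.2+e0), (p1.1,p1.2+e1), (p2.1,p2.2+e2)} :
      Finset (ℤ×ℤ)).card = 6 := by
    rw [Finset.card_insert_of_notMem (by
      simp only [Finset.mem_insert, Finset.mem_singleton]; push_neg
      exact ⟨q01, q02, n0_0.symm, n1_0.symm, n2_0.symm⟩)]
    rw [Finset.card_insert_of_notMem (by
      simp only [Finset.mem_insert, Finset.mem_singleton]; push_neg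
      exact ⟨q12, n0_1.symm, n1_1.symm, n2_1.symm⟩)]
    rw [Finset.card_insert_of_notMem (by
      simp only [Finset.mem_insert, Finset.mem_singleton]; push_neg
      exact ⟨n0_2.symm, n1_2.symm, n2_2.symm⟩)]
    rw [Finset.card_insert_of_notMem (by
      simp only [Finset.mem_insert, Finset.mem_singleton]; push_neg
      exact ⟨h01, h02⟩)]
    rw [Finset.card_insert_of_notMem (by
      simp only [Finset.mem_singleton]; exact h12)]
    rw [Finset.card_singleton]
  have := Finset.card_le_card hsub
  omega
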